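/- Let p, q > 0 be real numbers with pq = 4, and let X = ((pq−1, −p),(q, −1)) = ((3, −p),(q, −1)). Then for every positive integer k, X^k = ((2k+1, −kp),(kq, −2k+1)). Consequently (s_is_j)^k · α_i = (2k+1)α_i + kq·α_j has both coefficients positive, so s_is_j has infinite order. -/
import Mathlib


open Real

/-- The quasi-standard reflection `s_i` acting on `V = ℝⁿ` with basis of simple roots
`α_j = Pi.single j 1`: `s_i(v) = v − 2B(α_i,v)α_i` where `B(α_i,α_j) = M_ij/2`, so that
`2B(α_i, v) = ∑_j M_ij v_j`. -/
noncomputable def erefl {n : ℕ} (M : Matrix (Fin n) (Fin n) ℝ) (i : Fin n)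
    (v : Fin n → ℝ) : Fin n → ℝ :=
  v - (∑ j, M i j * v j) • (Pi.single i 1 : Fin n → ℝ)

lemma erefl_step (p q : ℝ) (M : Matrix (Fin 2) (Fin 2) ℝ) (hM : M = !![2, -p; -q, 2])
    (a b : ℝ) :
    (erefl M 0 ∘ erefl M 1) (a • (Pi.single 0 1 : Fin 2 → ℝ) +
        b • (Pi.single 1 1 : Fin 2 → ℝ)) =
      ((p * q - 1) * a - p * b) • (Pi.single 0 1 : Fin 2 → ℝ) +
        (q * a - b) • (Pi.single 1 1 : Fin 2 → ℝ) := by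
  subst hM
  funext i
  fin_cases i <;>
    simp [erefl, Fin.sum_univ_two, Pi.single_apply] <;> ring

/-- When `pq = 4`: the powers of `X = ((pq−1,−p),(q,−1))` are `((2k+1, −kp),(kq, −2k+1))`;
consequently `(s_is_j)^k · α_i = (2k+1)α_i + kq·α_j` has both coefficients positive, and
`s_is_j` has infinite order. Here the reflections act on `V = ℝ²` with `M = ((2,−p),(−q,2))`. -/
theorem dihedral_pq_four (p q : ℝ) (hp : 0 < p) (hq : 0 < q) (hpq : p * q = 4)
    (X : Matrix (Fin 2) (Fin 2) ℝ) (hX : X = !![p * q - 1, -p; q, -1])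
    (M : Matrix (Fin 2) (Fin 2) ℝ) (hM : M = !![2, -p; -q, 2]) :
    (∀ k : ℕ, 0 < k →
      X ^ k = !![2 * (k : ℝ) + 1, -(k * p); k * q, -(2 * (k : ℝ)) + 1]) ∧
    (∀ k : ℕ, 0 < k →
      (erefl M 0 ∘ erefl M 1)^[k] (Pi.single 0 1) =
        (2 * (k : ℝ) + 1) • (Pi.single 0 1 : Fin 2 → ℝ) +
          ((k : ℝ) * q) • (Pi.single 1 1 : Fin 2 → ℝ) ∧
      (0 : ℝ) < 2 * (k : ℝ) + 1 ∧ (0 : ℝ) < (k : ℝ) * q) ∧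
    (∀ k : ℕ, 0 < k → (erefl M 0 ∘ erefl M 1)^[k] ≠ id) := by
  have hpow : ∀ k : ℕ, 0 < k →
      X ^ k = !![2 * (k : ℝ) + 1, -(k * p); k * q, -(2 * (k : ℝ)) + 1] := by
    intro k hk
    induction k with
    | zero => exact absurd hk (lt_irrefl 0)
    | succ n ih =>
      rcases Nat.eq_zero_or_pos n with hn | hn
      · subst hn
        simp [hX, hpq]
        norm_num
      · rw [pow_succ, ih hn, hX]
        ext i j
        fin_cases i <;> fin_cases j <;>
          simp [Matrix.mul_apply, Fin.sum_univ_two] <;> push_cast <;>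
          first
            | ring1
            | linear_combination ((n : ℝ) + 1) * hpq
            | linear_combination (n : ℝ) * hpq
            | linear_combination (-(n : ℝ)) * hpq
            | linear_combination ((n : ℝ) * q) * hpq
            | linear_combination (-((n : ℝ) * q)) * hpq
            | linear_combination ((n : ℝ) * p) * hpq
            | linear_combination (-((n : ℝ) * p)) * hpq
  have hit : ∀ k : ℕ, 0 < k →
      (erefl M 0 ∘ erefl M 1)^[k] (Pi.single 0 1) =
        (2 * (k : ℝ) + 1) • (Pi.single 0 1 : Fin 2 → ℝ) +
          ((k : ℝ) * q) • (Pi.single 1 1 : Fin 2 → ℝ) := by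
    intro k hk
    induction k with
    | zero => exact absurd hk (lt_irrefl 0)
    | succ n ih =>
      rcases Nat.eq_zero_or_pos n with hn | hn
      · subst hn
        have h0 : (Pi.single 0 1 : Fin 2 → ℝ) =
            (1 : ℝ) • (Pi.single 0 1 : Fin 2 → ℝ) +
            (0 : ℝ) • (Pi.single 1 1 : Fin 2 → ℝ) := by simp
        rw [Function.iterate_one, h0, erefl_step p q M hM, hpq]
        norm_num
      · rw [Function.iterate_succ_apply', ih hn, erefl_step p q M hM]
        have e1 : (p * q - 1) * (2 * (n : ℝ) + 1) - p * ((n : ℝ) * q) =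
            2 * ((n : ℕ) + 1 : ℕ) + 1 := by
          push_cast; linear_combination ((n : ℝ) + 1) * hpq
        have e2 : q * (2 * (n : ℝ) + 1) - (n : ℝ) * q = (((n : ℕ) + 1 : ℕ) : ℝ) * q := by
          push_cast; ring
        rw [e1, e2]
  refine ⟨hpow, fun k hk => ⟨hit k hk, by positivity, by positivity⟩, ?_⟩
  intro k hk hid
  have h1 := congrFun (congrFun hid (Pi.single 0 1)) 1
  rw [hit k hk] at h1
  simp [Pi.single_apply] at h1
  rcases h1 with h | h
  · exact absurd h (by positivity)
  · exact absurd h (ne_of_gt hq)
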